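/- (Metric Hahn–Banach) Let (X,d) be a metric space with base point x0 and Y ⊆ X a subset containing x0. For every metric functional h of Y (with the induced metric and base point x0) there exists a metric functional H of X whose restriction to Y equals h. -/

import Mathlib

def metricFunctionals (X : Type*) [MetricSpace X] (x0 : X) : Set (X → ℝ) :=
  closure (Set.range fun x : X => fun y : X => dist y x - dist x0 x)

theorem stmt_5 (X : Type*) [MetricSpace X] (x0 : X) (Y : Set X) (hx0 : x0 ∈ Y)
    (h : Y → ℝ) (hh : h ∈ metricFunctionals Y (⟨x0, hx0⟩ : Y)) :
    ∃ H ∈ metricFunctionals X x0, ∀ y : Y, H (y : X) = h y := by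
  classical
  set ρ : (X → ℝ) → (Y → ℝ) := fun f y => f (y : X) with hρdef
  have hρcont : Continuous ρ := continuous_pi fun y => continuous_apply (y : X)
  set S : Set (X → ℝ) :=
    Set.range (fun z : Y => fun x : X => dist x (z : X) - dist x0 (z : X)) with hSdef
  have hSsub : S ⊆ Set.range fun x : X => fun y : X => dist y x - dist x0 x := by
    rintro f ⟨z, rfl⟩; exact ⟨(z : X), rfl⟩
  -- closure S is compact
  set K : Set (X → ℝ) :=
    Set.pi Set.univ (fun x => Set.Icc (-(dist x x0)) (dist x x0)) with hKdef
  have hKcomp : IsCompact K := isCompact_univ_pi fun x => isCompact_Icc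
  have hKclosed : IsClosed K := isClosed_set_pi fun x _ => isClosed_Icc
  have hSK : S ⊆ K := by
    rintro f ⟨z, rfl⟩ x _
    simp only [Set.mem_Icc]
    have h1 := dist_triangle x0 x (z : X)
    have h2 := dist_triangle x x0 (z : X)
    rw [dist_comm x0 x] at h1
    constructor <;> linarith
  have hclS : IsCompact (closure S) :=
    hKcomp.of_isClosed_subset isClosed_closure (closure_minimal hSK hKclosed)
  have himg : IsClosed (ρ '' closure S) := (hclS.image hρcont).isClosed
  -- the Y-functionals from points are exactly ρ '' S
  have hrange : (Set.range fun z : Y => fun y : Y => dist y z -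
      dist (⟨x0, hx0⟩ : Y) z) = ρ '' S := by
    ext g
    constructor
    · rintro ⟨z, rfl⟩
      exact ⟨_, ⟨z, rfl⟩, by funext y; simp [hρdef, Subtype.dist_eq]⟩
    · rintro ⟨f, ⟨z, rfl⟩, rfl⟩
      exact ⟨z, by funext y; simp [hρdef, Subtype.dist_eq]⟩
  have hsub : closure (ρ '' S) ⊆ ρ '' closure S :=
    closure_minimal (Set.image_mono (f := ρ) subset_closure) himg
  have hh' : h ∈ ρ '' closure S := by
    apply hsub
    rw [← hrange]
    exact hh
  obtain ⟨H, hHmem, hHρ⟩ := hh'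
  refine ⟨H, closure_mono hSsub hHmem, fun y => ?_⟩
  exact congrFun hHρ y
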